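/- If S is a splitting family for [ω]^ω (for every infinite A ⊆ ω there is S ∈ S with both A ∩ S and A \ S infinite), then the family of clopen sets {S*, ω* \ S* : S ∈ S} T3-splits the nonempty open subsets of ω* = βω \ ω; consequently os₃(ω*) ≤ 𝔰, the splitting number. -/

import Mathlib

open Cardinal

/-- `ω*`, the Čech–Stone remainder of `ω`, realized as the space of free (non-principal)
ultrafilters on `ℕ` with the subspace topology from `Ultrafilter ℕ ≅ βω`. -/
abbrev OmegaStar : Type := {u : Ultrafilter ℕ // ∀ n : ℕ, u ≠ pure n}

/-- For `A ⊆ ω`, the basic clopen set `A* ⊆ ω*`. -/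
def ustar (A : Set ℕ) : Set OmegaStar := {u : OmegaStar | A ∈ u.1}

/-- `S` is a splitting family for `[ω]^ω`. -/
def IsSplittingFamily (S : Set (Set ℕ)) : Prop :=
  ∀ A : Set ℕ, A.Infinite → ∃ s ∈ S, (A ∩ s).Infinite ∧ (A \ s).Infinite

/-- The splitting number `𝔰`. -/
noncomputable def fraks : Cardinal :=
  sInf {κ | ∃ S : Set (Set ℕ), #S = κ ∧ IsSplittingFamily S}

/-- `𝒜` T3-splits the nonempty open subsets of `X`. -/
def T3Splits {X : Type*} [TopologicalSpace X] (𝒜 : Set (Set X)) : Prop :=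
  ∀ G : Set X, IsOpen G → G.Nonempty →
    ∃ a₀ ∈ 𝒜, ∃ a₁ ∈ 𝒜, closure a₀ ∩ closure a₁ = ∅ ∧
      (a₀ ∩ G).Nonempty ∧ (a₁ ∩ G).Nonempty

/-- The open T3-splitting number. -/
noncomputable def os3 (X : Type*) [TopologicalSpace X] : Cardinal :=
  sInf {κ | ∃ 𝒜 : Set (Set X), #𝒜 = κ ∧ (∀ a ∈ 𝒜, IsOpen a) ∧ T3Splits 𝒜}

lemma isOpen_ustar (A : Set ℕ) : IsOpen (ustar A) := by
  have h : ustar A = Subtype.val ⁻¹' {u : Ultrafilter ℕ | A ∈ u} := rfl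
  rw [h]
  exact (ultrafilter_isOpen_basic A).preimage continuous_subtype_val

lemma isClosed_ustar (A : Set ℕ) : IsClosed (ustar A) := by
  rw [← isOpen_compl_iff]
  have h : (ustar A)ᶜ = ustar Aᶜ := by
    ext u
    simp [ustar, Ultrafilter.compl_mem_iff_notMem]
  rw [h]
  exact isOpen_ustar _

lemma exists_free (B : Set ℕ) (hB : B.Infinite) : ∃ v : OmegaStar, B ∈ v.1 := by
  have hne : (Filter.cofinite ⊓ Filter.principal B).NeBot :=
    Filter.cofinite_inf_principal_neBot_iff.mpr hB
  set v := Ultrafilter.of (Filter.cofinite ⊓ Filter.principal B) with hv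
  have hle : (v : Filter ℕ) ≤ Filter.cofinite ⊓ Filter.principal B := Ultrafilter.of_le _
  have hcof : (v : Filter ℕ) ≤ Filter.cofinite := hle.trans inf_le_left
  have hBv : B ∈ v := Filter.le_principal_iff.mp (hle.trans inf_le_right)
  refine ⟨⟨v, ?_⟩, hBv⟩
  intro n hn
  have h1 : ({n}ᶜ : Set ℕ) ∈ v := hcof ((Set.finite_singleton n).compl_mem_cofinite)
  have h2 : ({n} : Set ℕ) ∈ v := by rw [hn]; exact rfl
  exact (Ultrafilter.compl_mem_iff_notMem.mp h1) h2

lemma t3_of_splitting {S : Set (Set ℕ)} (hS : IsSplittingFamily S) :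
    T3Splits ({A : Set OmegaStar | ∃ s ∈ S, A = ustar s} ∪
      {A : Set OmegaStar | ∃ s ∈ S, A = (ustar s)ᶜ}) := by
  rintro G hG ⟨u, hu⟩
  obtain ⟨U, hU, rfl⟩ := isOpen_induced_iff.mp hG
  obtain ⟨t, ht, hut, htU⟩ := ultrafilterBasis_is_basis.exists_subset_of_mem_open hu hU
  obtain ⟨A, rfl⟩ := ht
  have hA : A.Infinite := by
    by_contra hfin
    rw [Set.not_infinite] at hfin
    have hcof : (u.1 : Filter ℕ) ≤ Filter.cofinite := by
      rcases Ultrafilter.le_cofinite_or_eq_pure u.1 with h | ⟨n, hn⟩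
      · exact h
      · exact absurd hn (u.2 n)
    have : Aᶜ ∈ u.1 := hcof hfin.compl_mem_cofinite
    exact (Ultrafilter.compl_mem_iff_notMem.mp this) hut
  obtain ⟨s, hsS, h1, h2⟩ := hS A hA
  obtain ⟨v₀, hv₀⟩ := exists_free _ h1
  obtain ⟨v₁, hv₁⟩ := exists_free _ h2
  refine ⟨ustar s, Or.inl ⟨s, hsS, rfl⟩, (ustar s)ᶜ, Or.inr ⟨s, hsS, rfl⟩, ?_, ⟨v₀, ?_, ?_⟩,
    ⟨v₁, ?_, ?_⟩⟩
  · rw [(isClosed_ustar s).closure_eq,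
      (isClosed_compl_iff.mpr (isOpen_ustar s)).closure_eq, Set.inter_compl_self]
  · exact Filter.mem_of_superset hv₀ Set.inter_subset_right
  · exact htU (Filter.mem_of_superset hv₀ Set.inter_subset_left)
  · intro hmem
    have : (A \ s) ∩ s ∈ v₁.1 := Filter.inter_mem hv₁ hmem
    rw [Set.diff_inter_self] at this
    exact Filter.empty_notMem _ this
  · exact htU (Filter.mem_of_superset hv₁ Set.diff_subset)

lemma splitting_infinite {S : Set (Set ℕ)} (hS : IsSplittingFamily S) : S.Infinite := by
  by_contra h
  rw [Set.not_infinite] at h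
  have hfin := h
  have key : ∀ T : Set (Set ℕ), T.Finite →
      ∃ A : Set ℕ, A.Infinite ∧ ∀ s ∈ T, A ⊆ s ∨ A ⊆ sᶜ := by
    intro T hT
    refine Set.Finite.induction_on T hT ⟨Set.univ, Set.infinite_univ, by simp⟩ ?_
    rintro a T' ha hT' ⟨A, hAinf, hA⟩
    by_cases h : (A ∩ a).Infinite
    · refine ⟨A ∩ a, h, fun s hs => ?_⟩
      rcases hs with rfl | hs
      · exact Or.inl Set.inter_subset_right
      · rcases hA s hs with h' | h'
        · exact Or.inl (Set.inter_subset_left.trans h')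
        · exact Or.inr (Set.inter_subset_left.trans h')
    · have h' : (A \ a).Infinite := by
        rw [Set.not_infinite] at h
        by_contra hd
        rw [Set.not_infinite] at hd
        exact hAinf (by simpa [Set.inter_union_diff] using h.union hd)
      refine ⟨A \ a, h', fun s hs => ?_⟩
      rcases hs with rfl | hs
      · exact Or.inr fun x hx => hx.2
      · rcases hA s hs with h'' | h''
        · exact Or.inl (Set.diff_subset.trans h'')
        · exact Or.inr (Set.diff_subset.trans h'')
  obtain ⟨A, hAinf, hA⟩ := key S hfin
  obtain ⟨s, hsS, h1, h2⟩ := hS A hAinf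
  rcases hA s hsS with h | h
  · exact h2 (Set.Finite.subset (Set.finite_empty) (by intro x hx; exact hx.2 (h hx.1)))
  · exact h1 (Set.Finite.subset (Set.finite_empty) (by intro x hx; exact h hx.1 hx.2))

lemma univ_splitting : IsSplittingFamily Set.univ := by
  intro A hA
  set f := hA.natEmbedding
  refine ⟨Set.range (fun n => (f (2 * n)).1), Set.mem_univ _, ?_, ?_⟩
  · apply Set.infinite_of_injective_forall_mem (f := fun n => (f (2 * n)).1)
    · intro m n h
      have := f.injective (Subtype.ext h)
      omega
    · intro n
      exact ⟨(f (2 * n)).2, ⟨n, rfl⟩⟩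
  · apply Set.infinite_of_injective_forall_mem (f := fun n => (f (2 * n + 1)).1)
    · intro m n h
      have := f.injective (Subtype.ext h)
      omega
    · intro n
      refine ⟨(f (2 * n + 1)).2, ?_⟩
      rintro ⟨m, hm⟩
      have := f.injective (Subtype.ext hm)
      omega

/-- If `S` splits `[ω]^ω`, then `{s*, ω* \ s* : s ∈ S}` T3-splits the nonempty open
subsets of `ω*`; consequently `os₃(ω*) ≤ 𝔰`. -/
theorem stmt17 (S : Set (Set ℕ)) (hS : IsSplittingFamily S) :
    T3Splits ({A : Set OmegaStar | ∃ s ∈ S, A = ustar s} ∪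
      {A : Set OmegaStar | ∃ s ∈ S, A = (ustar s)ᶜ}) ∧
    os3 OmegaStar ≤ fraks := by
  refine ⟨t3_of_splitting hS, ?_⟩
  have hne : {κ | ∃ S : Set (Set ℕ), #S = κ ∧ IsSplittingFamily S}.Nonempty :=
    ⟨#(Set.univ : Set (Set ℕ)), Set.univ, rfl, univ_splitting⟩
  obtain ⟨S₀, hcard, hS₀⟩ := csInf_mem hne
  set 𝒜 : Set (Set OmegaStar) := {A | ∃ s ∈ S₀, A = ustar s} ∪
      {A | ∃ s ∈ S₀, A = (ustar s)ᶜ} with h𝒜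
  have hopen : ∀ a ∈ 𝒜, IsOpen a := by
    rintro a (⟨s, _, rfl⟩ | ⟨s, _, rfl⟩)
    · exact isOpen_ustar s
    · exact isOpen_compl_iff.mpr (isClosed_ustar s)
  have hos : os3 OmegaStar ≤ #𝒜 :=
    csInf_le' ⟨𝒜, rfl, hopen, t3_of_splitting hS₀⟩
  have himg1 : {A : Set OmegaStar | ∃ s ∈ S₀, A = ustar s} = ustar '' S₀ := by
    ext a; simp [eq_comm, Set.mem_image]
  have himg2 : {A : Set OmegaStar | ∃ s ∈ S₀, A = (ustar s)ᶜ}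
      = (fun s => (ustar s)ᶜ) '' S₀ := by
    ext a; simp [eq_comm, Set.mem_image]
  have hS₀inf : ℵ₀ ≤ #S₀ := by
    rw [Cardinal.aleph0_le_mk_iff, Set.infinite_coe_iff]
    exact splitting_infinite hS₀
  have hcard𝒜 : #𝒜 ≤ #S₀ := by
    calc #𝒜 ≤ #{A : Set OmegaStar | ∃ s ∈ S₀, A = ustar s}
        + #{A : Set OmegaStar | ∃ s ∈ S₀, A = (ustar s)ᶜ} := Cardinal.mk_union_le _ _
      _ ≤ #S₀ + #S₀ := by
          rw [himg1, himg2]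
          exact add_le_add (Cardinal.mk_image_le) (Cardinal.mk_image_le)
      _ = #S₀ := Cardinal.add_eq_self hS₀inf
  calc os3 OmegaStar ≤ #𝒜 := hos
    _ ≤ #S₀ := hcard𝒜
    _ = fraks := hcard
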